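/- Let Z ~ SN_k(Ω,α) and let B₁, …, B_h be symmetric positive semi-definite k×k real matrices such that (a) B_iΩB_j = 0 for all i ≠ j, and (b) αᵀΩB_iΩα ≠ 0 for at most one index i. Then the random variables ZᵀB₁Z, …, ZᵀB_hZ are mutually independent. -/

import Mathlib

open MeasureTheory Matrix ProbabilityTheory Real

/-- Standard normal cumulative distribution function
`Φ(x) = ∫_{-∞}^x (2π)^{-1/2} exp(-u²/2) du`. -/
noncomputable def stdNormCDF (x : ℝ) : ℝ :=
  ∫ u in Set.Iic x, (2 * Real.pi) ^ (-(1:ℝ)/2) * Real.exp (-(u ^ 2) / 2)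

/-- Density `φ(z; Ω) = (2π)^{-k/2} (det Ω)^{-1/2} exp(-½ zᵀ Ω⁻¹ z)` of the centred
multivariate normal distribution with covariance matrix `Ω`. -/
noncomputable def mvNormalPDF {ι : Type*} [Fintype ι] [DecidableEq ι]
    (Ω : Matrix ι ι ℝ) (z : ι → ℝ) : ℝ :=
  (2 * Real.pi) ^ (-(Fintype.card ι : ℝ) / 2) * Ω.det ^ (-(1:ℝ)/2) *
    Real.exp (-(z ⬝ᵥ Ω⁻¹.mulVec z) / 2)

/-- Density `f(z) = 2 φ(z; Ω) Φ(αᵀ z)` of the multivariate skew-normal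
distribution `SN(Ω, α)`. -/
noncomputable def snPDF {ι : Type*} [Fintype ι] [DecidableEq ι]
    (Ω : Matrix ι ι ℝ) (α : ι → ℝ) (z : ι → ℝ) : ℝ :=
  2 * mvNormalPDF Ω z * stdNormCDF (α ⬝ᵥ z)

/-- A correlation matrix: symmetric positive definite with unit diagonal. -/
def IsCorrelationMatrix {ι : Type*} [Fintype ι] (Ω : Matrix ι ι ℝ) : Prop :=
  Ω.PosDef ∧ ∀ i, Ω i i = 1

/-- The law of the multivariate skew-normal distribution `SN(Ω, α)`:
the measure on `ι → ℝ` with density `snPDF Ω α` w.r.t. Lebesgue measure. -/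
noncomputable def snMeasure {ι : Type*} [Fintype ι] [DecidableEq ι]
    (Ω : Matrix ι ι ℝ) (α : ι → ℝ) : Measure (ι → ℝ) :=
  volume.withDensity fun z => ENNReal.ofReal (snPDF Ω α z)

/-- Chi-square density with `p` degrees of freedom. -/
noncomputable def chiSqPDF (p : ℕ) (x : ℝ) : ℝ :=
  if 0 < x then x ^ ((p:ℝ)/2 - 1) * Real.exp (-x/2) / (2 ^ ((p:ℝ)/2) * Real.Gamma ((p:ℝ)/2))
  else 0

/-- Chi-square law with `p` degrees of freedom. -/
noncomputable def chiSqMeasure (p : ℕ) : Measure ℝ :=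
  volume.withDensity fun x => ENNReal.ofReal (chiSqPDF p x)

/-- independence of quadratic forms.  If `Z ~ SN_k(Ω, α)` and the
symmetric positive semi-definite matrices `B i` satisfy (a) `B_iΩB_j = 0` for
`i ≠ j` and (b) `αᵀΩB_iΩα ≠ 0` for at most one `i`, then the quadratic forms
`ZᵀB_iZ` are mutually independent. -/
noncomputable def gpdf (x : ℝ) : ℝ := (2 * Real.pi) ^ (-(1:ℝ)/2) * Real.exp (-(x ^ 2) / 2)

noncomputable def gaussM (ι : Type*) [Fintype ι] : Measure (ι → ℝ) :=
  volume.withDensity fun u => ENNReal.ofReal (∏ j, gpdf (u j))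

-- === from c1.lean ===


lemma gpdf_nonneg (x : ℝ) : 0 ≤ gpdf x := by
  unfold gpdf; positivity

lemma gpdf_eq (x : ℝ) : gpdf x = (2 * Real.pi) ^ (-(1:ℝ)/2) * Real.exp (-(1/2) * x ^ 2) := by
  unfold gpdf; ring_nf

lemma continuous_gpdf : Continuous gpdf := by
  unfold gpdf; fun_prop

lemma integrable_gpdf : Integrable gpdf := by
  have h := integrable_exp_neg_mul_sq (b := 1/2) (by norm_num)
  have := h.const_mul ((2 * Real.pi) ^ (-(1:ℝ)/2))
  refine this.congr ?_
  filter_upwards with x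
  rw [gpdf_eq]

lemma two_pi_rpow_mul_sqrt : (2 * Real.pi) ^ (-(1:ℝ)/2) * Real.sqrt (2 * Real.pi) = 1 := by
  have h2π : (0:ℝ) < 2 * Real.pi := by positivity
  rw [Real.sqrt_eq_rpow, ← Real.rpow_add h2π]
  norm_num

lemma integral_gpdf : ∫ x, gpdf x = 1 := by
  simp only [gpdf_eq]
  rw [integral_const_mul, integral_gaussian]
  have : Real.pi / (1/2) = 2 * Real.pi := by ring
  rw [this, two_pi_rpow_mul_sqrt]

-- === from c2.lean ===
lemma stdNormCDF_eq (x : ℝ) : stdNormCDF x = ∫ u in Set.Iic x, gpdf u := rfl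

lemma stdNormCDF_nonneg (x : ℝ) : 0 ≤ stdNormCDF x := by
  rw [stdNormCDF_eq]
  exact integral_nonneg fun u => gpdf_nonneg u

lemma gpdf_even (x : ℝ) : gpdf (-x) = gpdf x := by unfold gpdf; ring_nf

lemma stdNormCDF_add_neg (x : ℝ) : stdNormCDF x + stdNormCDF (-x) = 1 := by
  rw [stdNormCDF_eq, stdNormCDF_eq]
  have h1 : ∫ u in Set.Iic (-x), gpdf u = ∫ u in Set.Ioi x, gpdf u := by
    have h := integral_comp_neg_Iic (-x) gpdf
    simp only [gpdf_even, neg_neg] at h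
    exact h
  rw [h1]
  have h2 : (∫ u in Set.Iic x, gpdf u) + ∫ u in Set.Ioi x, gpdf u = ∫ u, gpdf u := by
    rw [← setIntegral_union (Set.Iic_disjoint_Ioi le_rfl)
      measurableSet_Ioi integrable_gpdf.integrableOn integrable_gpdf.integrableOn,
      Set.Iic_union_Ioi, setIntegral_univ]
  rw [h2, integral_gpdf]

lemma monotone_stdNormCDF : Monotone stdNormCDF := by
  intro a b hab
  rw [stdNormCDF_eq, stdNormCDF_eq]
  exact setIntegral_mono_set integrable_gpdf.integrableOn
    (Filter.Eventually.of_forall fun u => gpdf_nonneg u)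
    (HasSubset.Subset.eventuallyLE (Set.Iic_subset_Iic.2 hab))

lemma measurable_stdNormCDF : Measurable stdNormCDF := monotone_stdNormCDF.measurable

lemma stdNormCDF_le_one (x : ℝ) : stdNormCDF x ≤ 1 := by
  nlinarith [stdNormCDF_nonneg (-x), stdNormCDF_add_neg x]

-- === from c3.lean ===
lemma measurable_gpdf_prod (ι : Type*) [Fintype ι] :
    Measurable fun u : ι → ℝ => ENNReal.ofReal (∏ j, gpdf (u j)) := by
  apply Measurable.ennreal_ofReal
  exact Finset.measurable_prod _ fun j _ =>
    continuous_gpdf.measurable.comp (measurable_pi_apply j)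

instance gaussM_prob (ι : Type*) [Fintype ι] : IsProbabilityMeasure (gaussM ι) := by
  constructor
  unfold gaussM
  rw [withDensity_apply _ MeasurableSet.univ, setLIntegral_univ]
  have hint : Integrable (fun u : ι → ℝ => ∏ j, gpdf (u j)) :=
    Integrable.fintype_prod fun _ => integrable_gpdf
  rw [← ofReal_integral_eq_lintegral_ofReal hint
    (Filter.Eventually.of_forall fun u => Finset.prod_nonneg fun j _ => gpdf_nonneg _)]
  rw [integral_fintype_prod_volume_eq_prod (f := fun _ x => gpdf x)]
  simp [integral_gpdf]

lemma map_equiv_withDensity {α β : Type*} [MeasurableSpace α] [MeasurableSpace β]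
    (e : α ≃ᵐ β) (μ : Measure α) (g : β → ENNReal) (hg : Measurable g) :
    Measure.map e (μ.withDensity (g ∘ e)) = (Measure.map e μ).withDensity g := by
  ext s hs
  rw [Measure.map_apply e.measurable hs, withDensity_apply _ hs,
    withDensity_apply _ (e.measurable hs), setLIntegral_map hs hg e.measurable]
  rfl

lemma withDensity_prod {α β : Type*} [MeasurableSpace α] [MeasurableSpace β]
    (μ : Measure α) (ν : Measure β) [SigmaFinite μ] [SigmaFinite ν]
    (f : α → ℝ) (g : β → ℝ) (hf : Measurable f) (hg : Measurable g) :
    (μ.withDensity fun a => ENNReal.ofReal (f a)).prod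
      (ν.withDensity fun b => ENNReal.ofReal (g b)) =
    (μ.prod ν).withDensity fun z => ENNReal.ofReal (f z.1) * ENNReal.ofReal (g z.2) := by
  refine Measure.prod_eq fun s t hs ht => ?_
  rw [withDensity_apply _ (hs.prod ht), ← Measure.prod_restrict,
    lintegral_prod_mul (hf.ennreal_ofReal.aemeasurable) (hg.ennreal_ofReal.aemeasurable),
    withDensity_apply _ hs, withDensity_apply _ ht]

-- === from c4.lean ===
lemma measurable_gpdf_prod' (ι : Type*) [Fintype ι] :
    Measurable fun u : ι → ℝ => ∏ j, gpdf (u j) :=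
  Finset.measurable_prod _ fun j _ => continuous_gpdf.measurable.comp (measurable_pi_apply j)

lemma gaussM_map_piEquiv {ι : Type*} [Fintype ι] (p : ι → Prop) [DecidablePred p] :
    Measure.map (MeasurableEquiv.piEquivPiSubtypeProd (fun _ : ι => ℝ) p) (gaussM ι)
      = (gaussM {j // p j}).prod (gaussM {j // ¬ p j}) := by
  have hvol := volume_preserving_piEquivPiSubtypeProd (fun _ : ι => ℝ) p
  set e := MeasurableEquiv.piEquivPiSubtypeProd (fun _ : ι => ℝ) p
  set G : (({j // p j} → ℝ) × ({j // ¬ p j} → ℝ)) → ENNReal :=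
    fun z => ENNReal.ofReal (∏ j, gpdf (z.1 j)) * ENNReal.ofReal (∏ j, gpdf (z.2 j)) with hG
  have hGmeas : Measurable G :=
    ((measurable_gpdf_prod _).comp measurable_fst).mul
      ((measurable_gpdf_prod _).comp measurable_snd)
  have h1 : gaussM ι = volume.withDensity (G ∘ e) := by
    unfold gaussM
    congr 1
    ext u
    show ENNReal.ofReal (∏ j, gpdf (u j)) = G (e u)
    have : G (e u) = ENNReal.ofReal (∏ j : {j // p j}, gpdf (u j)) *
        ENNReal.ofReal (∏ j : {j // ¬ p j}, gpdf (u j)) := rfl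
    rw [this, ← ENNReal.ofReal_mul (Finset.prod_nonneg fun j _ => gpdf_nonneg _),
      Fintype.prod_subtype_mul_prod_subtype p (fun j => gpdf (u j))]
  rw [h1, map_equiv_withDensity e volume G hGmeas, hvol.map_eq]
  unfold gaussM
  rw [withDensity_prod volume volume _ _ (measurable_gpdf_prod' _) (measurable_gpdf_prod' _)]
  rw [Measure.volume_eq_prod]

lemma gaussM_inter_prod {ι : Type*} [Fintype ι] (p : ι → Prop) [DecidablePred p]
    {C D : Set (ι → ℝ)} (hC : MeasurableSet C) (hD : MeasurableSet D)
    (hCdep : ∀ u v : ι → ℝ, (∀ j, p j → u j = v j) → u ∈ C → v ∈ C)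
    (hDdep : ∀ u v : ι → ℝ, (∀ j, ¬ p j → u j = v j) → u ∈ D → v ∈ D) :
    gaussM ι (C ∩ D) = gaussM ι C * gaussM ι D := by
  set e := MeasurableEquiv.piEquivPiSubtypeProd (fun _ : ι => ℝ) p with he
  set ext1 : ({j // p j} → ℝ) → (ι → ℝ) := fun w j => if h : p j then w ⟨j, h⟩ else 0 with hext1
  set ext2 : ({j // ¬ p j} → ℝ) → (ι → ℝ) := fun w j => if h : ¬ p j then w ⟨j, h⟩ else 0
  have hext1m : Measurable ext1 := by
    apply measurable_pi_lambda
    intro j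
    by_cases h : p j
    · simp only [hext1, dif_pos h]; exact measurable_pi_apply _
    · simp only [hext1, dif_neg h]; exact measurable_const
  have hext2m : Measurable ext2 := by
    apply measurable_pi_lambda
    intro j
    by_cases h : ¬ p j
    · simp only [ext2, dif_pos h]; exact measurable_pi_apply _
    · simp only [ext2, dif_neg h]; exact measurable_const
  set C' : Set ({j // p j} → ℝ) := ext1 ⁻¹' C with hC'
  set D' : Set ({j // ¬ p j} → ℝ) := ext2 ⁻¹' D with hD'
  have hC'm : MeasurableSet C' := hext1m hC
  have hD'm : MeasurableSet D' := hext2m hD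
  have hCpre : C = e ⁻¹' (C' ×ˢ Set.univ) := by
    ext u
    simp only [Set.mem_preimage, Set.mem_prod, Set.mem_univ, and_true]
    show u ∈ C ↔ ext1 (fun j : {j // p j} => u j) ∈ C
    constructor
    · exact fun h => hCdep u _ (fun j hj => by simp [hext1, dif_pos hj]) h
    · exact fun h => hCdep _ u (fun j hj => by simp [hext1, dif_pos hj]) h
  have hDpre : D = e ⁻¹' (Set.univ ×ˢ D') := by
    ext u
    simp only [Set.mem_preimage, Set.mem_prod, Set.mem_univ, true_and]
    show u ∈ D ↔ ext2 (fun j : {j // ¬ p j} => u j) ∈ D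
    constructor
    · exact fun h => hDdep u _ (fun j hj => by simp [ext2, hj]) h
    · exact fun h => hDdep _ u (fun j hj => by simp [ext2, hj]) h
  have hmap := gaussM_map_piEquiv p
  have key : ∀ (s : Set ({j // p j} → ℝ)) (t : Set ({j // ¬ p j} → ℝ)),
      MeasurableSet s → MeasurableSet t →
      gaussM ι (e ⁻¹' (s ×ˢ t)) = gaussM {j // p j} s * gaussM {j // ¬ p j} t := by
    intro s t hs ht
    rw [← Measure.map_apply e.measurable (hs.prod ht), hmap, Measure.prod_prod]
  have hint : C ∩ D = e ⁻¹' (C' ×ˢ D') := by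
    rw [hCpre, hDpre, ← Set.preimage_inter, Set.prod_inter_prod, Set.univ_inter, Set.inter_univ]
  rw [hint, key _ _ hC'm hD'm, hCpre, hDpre, key _ _ hC'm MeasurableSet.univ,
    key _ _ MeasurableSet.univ hD'm]
  simp only [measure_univ, mul_one, one_mul]

-- === from c5.lean ===
lemma gaussM_iInter {ι : Type*} [Fintype ι] {I : Type*} [DecidableEq I] (s : Finset I)
    (t : I → Finset ι)
    (hdisj : ∀ i ∈ s, ∀ j ∈ s, i ≠ j → Disjoint (t i) (t j))
    (C : I → Set (ι → ℝ)) (hC : ∀ i ∈ s, MeasurableSet (C i))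
    (hdep : ∀ i ∈ s, ∀ u v : ι → ℝ, (∀ j ∈ t i, u j = v j) → u ∈ C i → v ∈ C i) :
    gaussM ι (⋂ i ∈ s, C i) = ∏ i ∈ s, gaussM ι (C i) := by
  classical
  induction s using Finset.induction_on with
  | empty => simp
  | @insert a s ha ih =>
    have hsub : ∀ i ∈ s, i ∈ insert a s := fun i hi => Finset.mem_insert_of_mem hi
    have hmeasInter : MeasurableSet (⋂ i ∈ s, C i) :=
      MeasurableSet.biInter (Finset.countable_toSet s) (fun i hi => hC i (hsub i hi))
    have step : gaussM ι (C a ∩ ⋂ i ∈ s, C i) = gaussM ι (C a) * gaussM ι (⋂ i ∈ s, C i) := by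
      apply gaussM_inter_prod (fun j => j ∈ t a) (hC a (Finset.mem_insert_self a s)) hmeasInter
      · intro u v huv hu
        exact hdep a (Finset.mem_insert_self a s) u v (fun j hj => huv j hj) hu
      · intro u v huv hu
        simp only [Set.mem_iInter] at hu ⊢
        intro i hi
        refine hdep i (hsub i hi) u v (fun j hj => ?_) (hu i hi)
        refine huv j (fun hja => ?_)
        exact (Finset.disjoint_left.1 (hdisj i (hsub i hi) a (Finset.mem_insert_self a s)
          (fun hia => ha (hia ▸ hi)))) hj hja
    rw [Finset.set_biInter_insert, Finset.prod_insert ha, step,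
      ih (fun i hi j hj => hdisj i (hsub i hi) j (hsub j hj))
        (fun i hi => hC i (hsub i hi)) (fun i hi => hdep i (hsub i hi))]

-- === from c6.lean ===
section B
variable {k : ℕ}

lemma measurable_dotmul (α : Fin k → ℝ) : Measurable fun z : Fin k → ℝ => α ⬝ᵥ z := by
  unfold dotProduct
  exact Finset.measurable_sum _ fun j _ => (measurable_pi_apply j).const_mul _

lemma measurable_quadform (M : Matrix (Fin k) (Fin k) ℝ) :
    Measurable fun z : Fin k → ℝ => z ⬝ᵥ M.mulVec z := by
  unfold dotProduct Matrix.mulVec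
  exact Finset.measurable_sum _ fun j _ => (measurable_pi_apply j).mul
    (Finset.measurable_sum _ fun l _ => (measurable_pi_apply l).const_mul _)

lemma measurable_mvNormalPDF (Ω : Matrix (Fin k) (Fin k) ℝ) :
    Measurable fun z => mvNormalPDF Ω z := by
  unfold mvNormalPDF
  exact (((measurable_quadform Ω⁻¹).neg.div_const 2).exp).const_mul _

lemma mvNormalPDF_nonneg (Ω : Matrix (Fin k) (Fin k) ℝ) (hΩ : Ω.PosDef) (z : Fin k → ℝ) :
    0 ≤ mvNormalPDF Ω z := by
  unfold mvNormalPDF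
  have := hΩ.det_pos
  positivity

lemma mvNormalPDF_neg (Ω : Matrix (Fin k) (Fin k) ℝ) (z : Fin k → ℝ) :
    mvNormalPDF Ω (-z) = mvNormalPDF Ω z := by
  unfold mvNormalPDF
  rw [Matrix.mulVec_neg, dotProduct_neg, neg_dotProduct, neg_neg]

lemma snMeasure_symm_eq (Ω : Matrix (Fin k) (Fin k) ℝ) (hΩ : Ω.PosDef) (α : Fin k → ℝ)
    (E : Set (Fin k → ℝ)) (hE : MeasurableSet E) (hsymm : ∀ z, z ∈ E → -z ∈ E) :
    snMeasure Ω α E = volume.withDensity (fun z => ENNReal.ofReal (mvNormalPDF Ω z)) E := by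
  have hsymm' : ∀ z, z ∈ E ↔ -z ∈ E := fun z =>
    ⟨hsymm z, fun h => by simpa using hsymm (-z) h⟩
  have hnegpre : (fun z : Fin k → ℝ => -z) ⁻¹' E = E := by
    ext z; exact (hsymm' z).symm
  have hnegmp : MeasurePreserving (fun z : Fin k → ℝ => -z) volume volume :=
    Measure.measurePreserving_neg volume
  set f : (Fin k → ℝ) → ENNReal := fun z => ENNReal.ofReal (snPDF Ω α z) with hf
  have hfmeas : Measurable f := by
    apply Measurable.ennreal_ofReal
    exact (((measurable_mvNormalPDF Ω).const_mul 2).mul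
      (measurable_stdNormCDF.comp (measurable_dotmul α)))
  have hflip : ∫⁻ z in E, f z ∂volume = ∫⁻ z in E, f (-z) ∂volume := by
    conv_lhs => rw [← hnegmp.map_eq]
    rw [setLIntegral_map hE hfmeas hnegmp.measurable, hnegpre]
  have hgmeas : Measurable fun z => ENNReal.ofReal (mvNormalPDF Ω z) :=
    (measurable_mvNormalPDF Ω).ennreal_ofReal
  have hsum : ∀ z, f z + f (-z) = 2 * ENNReal.ofReal (mvNormalPDF Ω z) := by
    intro z
    have h1 : snPDF Ω α z = 2 * mvNormalPDF Ω z * stdNormCDF (α ⬝ᵥ z) := rfl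
    have h2 : snPDF Ω α (-z) = 2 * mvNormalPDF Ω z * stdNormCDF (-(α ⬝ᵥ z)) := by
      unfold snPDF
      rw [mvNormalPDF_neg, dotProduct_neg]
    have hnn := mvNormalPDF_nonneg Ω hΩ z
    rw [hf]
    simp only [h1, h2]
    rw [← ENNReal.ofReal_add
      (mul_nonneg (by linarith) (stdNormCDF_nonneg (α ⬝ᵥ z)))
      (mul_nonneg (by linarith) (stdNormCDF_nonneg (-(α ⬝ᵥ z))))]
    have : 2 * mvNormalPDF Ω z * stdNormCDF (α ⬝ᵥ z) +
        2 * mvNormalPDF Ω z * stdNormCDF (-(α ⬝ᵥ z)) = 2 * mvNormalPDF Ω z := by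
      have := stdNormCDF_add_neg (α ⬝ᵥ z)
      nlinarith
    rw [this, ENNReal.ofReal_mul (by norm_num)]
    norm_num
  have key : (2 : ENNReal) * ∫⁻ z in E, f z ∂volume
      = 2 * ∫⁻ z in E, ENNReal.ofReal (mvNormalPDF Ω z) ∂volume := by
    calc (2 : ENNReal) * ∫⁻ z in E, f z ∂volume
        = (∫⁻ z in E, f z ∂volume) + ∫⁻ z in E, f z ∂volume := two_mul _
      _ = (∫⁻ z in E, f z ∂volume) + ∫⁻ z in E, f (-z) ∂volume := by
          nth_rewrite 2 [hflip]; rfl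
      _ = ∫⁻ z in E, (f z + f (-z)) ∂volume :=
          (lintegral_add_left hfmeas _).symm
      _ = ∫⁻ z in E, 2 * ENNReal.ofReal (mvNormalPDF Ω z) ∂volume := by
          simp only [hsum]
      _ = 2 * ∫⁻ z in E, ENNReal.ofReal (mvNormalPDF Ω z) ∂volume :=
          lintegral_const_mul 2 hgmeas
  have h2 : (2 : ENNReal) ≠ 0 := by norm_num
  have h2' : (2 : ENNReal) ≠ ⊤ := by norm_num
  have := (ENNReal.mul_right_inj h2 h2').1 key
  rw [snMeasure, withDensity_apply _ hE, withDensity_apply _ hE]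
  exact this
end B

-- === from c7.lean ===
lemma prod_gpdf {k : ℕ} (w : Fin k → ℝ) :
    ∏ j, gpdf (w j) = (2 * Real.pi) ^ (-(k : ℝ)/2) * Real.exp (-(w ⬝ᵥ w) / 2) := by
  unfold gpdf
  rw [Finset.prod_mul_distrib, Finset.prod_const, ← Real.exp_sum]
  have h2π : (0:ℝ) ≤ 2 * Real.pi := by positivity
  congr 1
  · rw [← Real.rpow_natCast ((2 * Real.pi) ^ (-(1:ℝ)/2)) (Finset.univ.card), ← Real.rpow_mul h2π]
    norm_num
    ring_nf
  · congr 1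
    unfold dotProduct
    rw [← Finset.sum_div, ← Finset.sum_neg_distrib]
    congr 1
    apply Finset.sum_congr rfl
    intros; ring

lemma gaussM_map_matrix {k : ℕ} (Ω Q : Matrix (Fin k) (Fin k) ℝ) (hΩ : Ω.PosDef)
    (hQ : Q * Qᵀ = Ω) :
    Measure.map (fun u => Q.mulVec u) (gaussM (Fin k)) =
      volume.withDensity fun z => ENNReal.ofReal (mvNormalPDF Ω z) := by
  have hdetΩ : Ω.det = Q.det ^ 2 := by rw [← hQ, det_mul, det_transpose, sq]
  have hdetQ : Q.det ≠ 0 := by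
    intro h
    have := hΩ.det_pos
    rw [hdetΩ, h] at this
    simp at this
  have hinv : Invertible Q := Q.invertibleOfIsUnitDet (isUnit_iff_ne_zero.2 hdetQ)
  let elin : (Fin k → ℝ) ≃ₗ[ℝ] (Fin k → ℝ) := Q.toLinearEquiv' hinv
  let econt : (Fin k → ℝ) ≃L[ℝ] (Fin k → ℝ) := elin.toContinuousLinearEquiv
  let e : (Fin k → ℝ) ≃ᵐ (Fin k → ℝ) := econt.toHomeomorph.toMeasurableEquiv
  have he : (e : (Fin k → ℝ) → (Fin k → ℝ)) = fun u => Q.mulVec u := by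
    funext u
    show elin u = Q.mulVec u
    have := Q.toLinearEquiv'_apply hinv
    calc elin u = Matrix.toLin' Q u := by rw [← this]; rfl
      _ = Q.mulVec u := Matrix.toLin'_apply Q u
  have hesymm : ∀ z, e.symm z = Q⁻¹.mulVec z := by
    intro z
    apply e.injective
    rw [e.apply_symm_apply, congrFun he (Q⁻¹.mulVec z)]
    show z = Q *ᵥ (Q⁻¹ *ᵥ z)
    rw [Matrix.mulVec_mulVec, Matrix.mul_nonsing_inv Q (isUnit_iff_ne_zero.2 hdetQ),
      Matrix.one_mulVec]
  -- density transform
  set G : (Fin k → ℝ) → ENNReal := fun z => ENNReal.ofReal (∏ j, gpdf ((Q⁻¹.mulVec z) j))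
    with hGdef
  have hGmeas : Measurable G := by
    apply (measurable_gpdf_prod (Fin k)).comp
    have : Measurable fun c : Fin k → ℝ => Q⁻¹.mulVec c := by
      unfold Matrix.mulVec dotProduct
      exact measurable_pi_lambda _ fun j => Finset.measurable_sum _
        fun l _ => (measurable_pi_apply l).const_mul _
    exact this
  have hcomp : (fun u : Fin k → ℝ => ENNReal.ofReal (∏ j, gpdf (u j))) = G ∘ e := by
    funext u
    show _ = G (e u)
    rw [congrFun he u, hGdef]
    show ENNReal.ofReal (∏ j, gpdf (u j)) = ENNReal.ofReal (∏ j, gpdf ((Q⁻¹ *ᵥ (Q *ᵥ u)) j))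
    rw [Matrix.mulVec_mulVec, Matrix.nonsing_inv_mul Q (isUnit_iff_ne_zero.2 hdetQ),
      Matrix.one_mulVec]
  have hmapvol : Measure.map e volume = ENNReal.ofReal |Q.det⁻¹| • volume := by
    have := Real.map_matrix_volume_pi_eq_smul_volume_pi (M := Q) hdetQ
    rw [← this, he]
    rfl
  have step1 : Measure.map (fun u => Q.mulVec u) (gaussM (Fin k)) =
      (ENNReal.ofReal |Q.det⁻¹| • volume).withDensity G := by
    rw [← he, gaussM, hcomp, map_equiv_withDensity e volume G hGmeas, hmapvol]
  rw [step1]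
  ext s hs
  rw [withDensity_apply _ hs, withDensity_apply _ hs, Measure.restrict_smul,
    lintegral_smul_measure]
  rw [smul_eq_mul, ← lintegral_const_mul _ hGmeas]
  apply lintegral_congr
  intro z
  rw [hGdef]
  simp only
  rw [prod_gpdf, ← ENNReal.ofReal_mul (abs_nonneg _)]
  congr 1
  unfold mvNormalPDF
  rw [Fintype.card_fin]
  have hquad : (Q⁻¹ *ᵥ z) ⬝ᵥ (Q⁻¹ *ᵥ z) = z ⬝ᵥ Ω⁻¹.mulVec z := by
    rw [← hQ, Matrix.mul_inv_rev, ← Matrix.transpose_nonsing_inv, ← Matrix.mulVec_mulVec]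
    conv_rhs => rw [Matrix.dotProduct_mulVec z, Matrix.vecMul_transpose]
  have hdetpow : Ω.det ^ (-(1:ℝ)/2) = |Q.det⁻¹| := by
    rw [hdetΩ, show (-(1:ℝ)/2) = -(1/2) by norm_num, Real.rpow_neg (sq_nonneg _),
      show ((1:ℝ)/2) = (1/2 : ℝ) from rfl, ← Real.sqrt_eq_rpow, Real.sqrt_sq_eq_abs, abs_inv]
  rw [hquad, hdetpow]
  ring

-- === from c8.lean ===

variable {k h : ℕ}


lemma inner_eq_dot (x y : EuclideanSpace ℝ (Fin k)) :
    (inner ℝ x y : ℝ) = (x : Fin k → ℝ) ⬝ᵥ (y : Fin k → ℝ) := by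
  simp [PiLp.inner_apply, RCLike.inner_apply, dotProduct, mul_comm, conj_trivial]

lemma dot_mulVec_left (A : Matrix (Fin k) (Fin k) ℝ) (a w : Fin k → ℝ) :
    (A.mulVec a) ⬝ᵥ w = a ⬝ᵥ (Aᵀ.mulVec w) := by
  rw [dotProduct_comm, Matrix.dotProduct_mulVec, dotProduct_comm,
    ← Matrix.mulVec_transpose]

noncomputable def mulVecE (M : Matrix (Fin k) (Fin k) ℝ) :
    EuclideanSpace ℝ (Fin k) →ₗ[ℝ] EuclideanSpace ℝ (Fin k) where
  toFun x := WithLp.toLp 2 (M.mulVec x)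
  map_add' x y := by simp [Matrix.mulVec_add]
  map_smul' c x := by simp [Matrix.mulVec_smul]

lemma mulVecE_apply (M : Matrix (Fin k) (Fin k) ℝ) (x : EuclideanSpace ℝ (Fin k)) :
    (mulVecE M x : Fin k → ℝ) = M.mulVec x := rfl

theorem simultaneous_block_diag (M : Fin h → Matrix (Fin k) (Fin k) ℝ)
    (hsymm : ∀ i, (M i)ᵀ = M i) (hzero : ∀ i j, i ≠ j → M i * M j = 0) :
    ∃ (P : Matrix (Fin k) (Fin k) ℝ) (t : Fin h → Finset (Fin k)),
      P * Pᵀ = 1 ∧ (∀ i j, i ≠ j → Disjoint (t i) (t j)) ∧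
      (∀ i a c, a ∉ t i ∨ c ∉ t i → (Pᵀ * M i * P) a c = 0) := by
  classical
  set V : Fin h → Submodule ℝ (EuclideanSpace ℝ (Fin k)) :=
    fun i => LinearMap.range (mulVecE (M i)) with hV
  set U : Submodule ℝ (EuclideanSpace ℝ (Fin k)) := ⨆ i, V i with hU
  set W : Option (Fin h) → Submodule ℝ (EuclideanSpace ℝ (Fin k)) :=
    fun o => o.elim Uᗮ V with hW
  -- orthogonality between distinct V i, V j
  have horthV : ∀ i j, i ≠ j → ∀ x ∈ V i, ∀ y ∈ V j, (inner ℝ x y : ℝ) = 0 := by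
    intro i j hij x hx y hy
    obtain ⟨a, rfl⟩ := hx
    obtain ⟨c, rfl⟩ := hy
    rw [inner_eq_dot, mulVecE_apply, mulVecE_apply, dot_mulVec_left, hsymm,
      Matrix.mulVec_mulVec, hzero i j hij, Matrix.zero_mulVec, dotProduct_zero]
  -- orthogonal family
  have hOrth : OrthogonalFamily ℝ (fun o => (W o : Type _))
      (fun o => (W o).subtypeₗᵢ) := by
    intro o o' hoo' x y
    match o, o' with
    | some i, some j =>
      have hij : i ≠ j := fun hh => hoo' (by rw [hh])
      exact horthV i j hij x x.2 y y.2
    | none, some j =>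
      have hyU : (y : EuclideanSpace ℝ (Fin k)) ∈ U := le_iSup V j y.2
      have hxO : (x : EuclideanSpace ℝ (Fin k)) ∈ Uᗮ := x.2
      show (inner ℝ (x : EuclideanSpace ℝ (Fin k)) (y : EuclideanSpace ℝ (Fin k)) : ℝ) = 0
      rw [real_inner_comm]
      exact (Submodule.mem_orthogonal U (x : EuclideanSpace ℝ (Fin k))).1 hxO y hyU
    | some i, none =>
      have hxU : (x : EuclideanSpace ℝ (Fin k)) ∈ U := le_iSup V i x.2
      have hyO : (y : EuclideanSpace ℝ (Fin k)) ∈ Uᗮ := y.2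
      exact (Submodule.mem_orthogonal U (y : EuclideanSpace ℝ (Fin k))).1 hyO x hxU
  have hind : iSupIndep W := hOrth.independent
  have hsup : ⨆ o, W o = ⊤ := by
    rw [iSup_option]
    simp only [hW, Option.elim]
    rw [sup_comm]
    exact Submodule.sup_orthogonal_of_hasOrthogonalProjection
  have hInt : DirectSum.IsInternal W :=
    DirectSum.isInternal_submodule_of_iSupIndep_of_iSup_eq_top hind hsup
  have hn : Module.finrank ℝ (EuclideanSpace ℝ (Fin k)) = k := finrank_euclideanSpace_fin
  set b := hInt.subordinateOrthonormalBasis hn hOrth with hb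
  set idx : Fin k → Option (Fin h) :=
    fun a => hInt.subordinateOrthonormalBasisIndex hn a hOrth with hidx
  have hmem : ∀ a, b a ∈ W (idx a) :=
    fun a => hInt.subordinateOrthonormalBasis_subordinate hn a hOrth
  set t : Fin h → Finset (Fin k) :=
    fun i => Finset.univ.filter (fun a => idx a = some i) with ht
  set P : Matrix (Fin k) (Fin k) ℝ := Matrix.of (fun a c => b c a) with hP
  -- orthogonality of P
  have hPtP : Pᵀ * P = 1 := by
    ext c c'
    rw [Matrix.mul_apply, Matrix.one_apply]
    have : ∀ a, Pᵀ c a * P a c' = b c a * b c' a := fun a => rfl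
    simp only [this]
    have hinner := (orthonormal_iff_ite (𝕜 := ℝ)).1 b.orthonormal c c'
    rw [inner_eq_dot] at hinner
    unfold dotProduct at hinner
    rw [hinner]
  have hPPt : P * Pᵀ = 1 := mul_eq_one_comm.1 hPtP
  -- killing lemma
  have hkill : ∀ (i : Fin h) (o : Option (Fin h)), o ≠ some i →
      ∀ x ∈ W o, (M i).mulVec x = 0 := by
    intro i o hoi x hx
    match o with
    | some j =>
      have hij : j ≠ i := fun hh => hoi (by rw [hh])
      obtain ⟨y, rfl⟩ := hx
      rw [mulVecE_apply, Matrix.mulVec_mulVec, hzero i j (Ne.symm hij), Matrix.zero_mulVec]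
    | none =>
      have hxU : x ∈ Uᗮ := hx
      have hdot : ∀ y : Fin k → ℝ, (x : Fin k → ℝ) ⬝ᵥ ((M i).mulVec y) = 0 := by
        intro y
        have hmem' : (mulVecE (M i) (WithLp.toLp 2 y) : EuclideanSpace ℝ (Fin k)) ∈ U :=
          le_iSup V i ⟨_, rfl⟩
        have := (Submodule.mem_orthogonal U x).1 hxU _ hmem'
        rw [inner_eq_dot, mulVecE_apply] at this
        rw [dotProduct_comm] at this
        exact this
      have : ((M i).mulVec x) ⬝ᵥ ((M i).mulVec x) = 0 := by
        rw [dot_mulVec_left, hsymm, Matrix.mulVec_mulVec, ← Matrix.mulVec_mulVec]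
        exact hdot _
      exact (dotProduct_self_eq_zero).1 this
  -- entry formula
  have hentry : ∀ (N : Matrix (Fin k) (Fin k) ℝ) (a c : Fin k),
      (Pᵀ * N * P) a c = (b a : Fin k → ℝ) ⬝ᵥ (N.mulVec (b c)) := by
    intro N a c
    rw [Matrix.mul_apply]
    simp only [Matrix.mulVec, dotProduct, Matrix.mul_apply, Matrix.transpose_apply,
      hP, Matrix.of_apply, Finset.sum_mul, Finset.mul_sum]
    rw [Finset.sum_comm]
    apply Finset.sum_congr rfl
    intro x _
    apply Finset.sum_congr rfl
    intro y _
    ring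
  refine ⟨P, t, hPPt, ?_, ?_⟩
  · intro i j hij
    rw [Finset.disjoint_left]
    intro a hai haj
    rw [ht] at hai haj
    simp only [Finset.mem_filter] at hai haj
    exact hij (by rw [← Option.some_inj, ← hai.2, haj.2])
  · intro i a c hac
    rw [hentry]
    rcases hac with hna | hnc
    · have : idx a ≠ some i := by
        intro hh
        exact hna (by rw [ht]; simp [hh])
      have hza := hkill i (idx a) this (b a) (hmem a)
      rw [Matrix.dotProduct_mulVec, ← Matrix.mulVec_transpose, hsymm, hza,
        zero_dotProduct]
    · have : idx c ≠ some i := by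
        intro hh
        exact hnc (by rw [ht]; simp [hh])
      have hzc := hkill i (idx c) this (b c) (hmem c)
      rw [hzc, dotProduct_zero]

-- === from c9.lean ===
lemma quad_comp {k : ℕ} (C X : Matrix (Fin k) (Fin k) ℝ) (u : Fin k → ℝ) :
    (C.mulVec u) ⬝ᵥ X.mulVec (C.mulVec u) = u ⬝ᵥ ((Cᵀ * X * C).mulVec u) := by
  rw [Matrix.mulVec_mulVec, dot_mulVec_left, Matrix.mulVec_mulVec, ← Matrix.mul_assoc]

lemma quad_dep {k : ℕ} (N : Matrix (Fin k) (Fin k) ℝ) (t : Finset (Fin k))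
    (hsupp : ∀ a c, a ∉ t ∨ c ∉ t → N a c = 0) (u v : Fin k → ℝ)
    (huv : ∀ j ∈ t, u j = v j) : u ⬝ᵥ N.mulVec u = v ⬝ᵥ N.mulVec v := by
  simp only [dotProduct, Matrix.mulVec, Finset.mul_sum]
  apply Finset.sum_congr rfl
  intro a _
  apply Finset.sum_congr rfl
  intro c _
  by_cases hat : a ∈ t
  · by_cases hct : c ∈ t
    · rw [huv a hat, huv c hct]
    · rw [hsupp a c (Or.inr hct)]; ring
  · rw [hsupp a c (Or.inl hat)]; ring

lemma quadform_neg {k : ℕ} (M : Matrix (Fin k) (Fin k) ℝ) (z : Fin k → ℝ) :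
    (-z) ⬝ᵥ M.mulVec (-z) = z ⬝ᵥ M.mulVec z := by
  rw [Matrix.mulVec_neg, dotProduct_neg, neg_dotProduct, neg_neg]

lemma herm_transpose {k : ℕ} {X : Matrix (Fin k) (Fin k) ℝ} (hX : X.IsHermitian) : Xᵀ = X := by
  rw [← Matrix.conjTranspose_eq_transpose_of_trivial]
  exact hX

theorem skewNormal_quadratic_forms_independent {k : ℕ}
    (Ω : Matrix (Fin k) (Fin k) ℝ) (hΩ : IsCorrelationMatrix Ω) (α : Fin k → ℝ)
    {S : Type*} [MeasureSpace S] [IsProbabilityMeasure (ℙ : Measure S)]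
    (Z : S → Fin k → ℝ) (hZmeas : Measurable Z)
    (hZlaw : Measure.map Z ℙ = snMeasure Ω α)
    (h : ℕ) (B : Fin h → Matrix (Fin k) (Fin k) ℝ)
    (hB : ∀ i, (B i).PosSemidef)
    (ha : ∀ i j, i ≠ j → B i * Ω * B j = 0)
    (hb : ∀ i j, α ⬝ᵥ (Ω * B i * Ω).mulVec α ≠ 0 →
      α ⬝ᵥ (Ω * B j * Ω).mulVec α ≠ 0 → i = j) :
    iIndepFun (fun i ω => Z ω ⬝ᵥ (B i).mulVec (Z ω)) ℙ := by
  classical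
  have hΩpd : Ω.PosDef := hΩ.1
  open scoped MatrixOrder in
  set A : Matrix (Fin k) (Fin k) ℝ := CFC.sqrt Ω with hAdef
  open scoped MatrixOrder in
  have hA2 : A * A = Ω := CFC.sqrt_mul_sqrt_self Ω hΩpd.posSemidef.nonneg
  open scoped MatrixOrder in
  have hAsymm : Aᵀ = A := herm_transpose (CFC.sqrt_nonneg Ω).isSelfAdjoint
  set M : Fin h → Matrix (Fin k) (Fin k) ℝ := fun i => A * B i * A with hMdef
  have hBsymm : ∀ i, (B i)ᵀ = B i := fun i => herm_transpose (hB i).1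
  have hMsymm : ∀ i, (M i)ᵀ = M i := by
    intro i
    rw [hMdef]
    simp only [Matrix.transpose_mul, hAsymm, hBsymm i, Matrix.mul_assoc]
  have hMzero : ∀ i j, i ≠ j → M i * M j = 0 := by
    intro i j hij
    have h1 : M i * M j = A * (B i * Ω * B j) * A := by
      rw [hMdef]
      simp only [← hA2, Matrix.mul_assoc]
    rw [h1, ha i j hij, Matrix.mul_zero, Matrix.zero_mul]
  obtain ⟨P, t, hPPt, hdisj, hsupp⟩ := simultaneous_block_diag M hMsymm hMzero
  set C : Matrix (Fin k) (Fin k) ℝ := A * P with hCdef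
  have hCCt : C * Cᵀ = Ω := by
    rw [hCdef, Matrix.transpose_mul, hAsymm]
    calc A * P * (Pᵀ * A) = A * (P * Pᵀ) * A := by simp only [Matrix.mul_assoc]
      _ = A * A := by rw [hPPt, Matrix.mul_one]
      _ = Ω := hA2
  have hmap := gaussM_map_matrix Ω C hΩpd hCCt
  have hN : ∀ i, Cᵀ * B i * C = Pᵀ * M i * P := by
    intro i
    rw [hCdef, Matrix.transpose_mul, hAsymm, hMdef]
    simp only [Matrix.mul_assoc]
  -- measurability of the C mulVec map
  have hCmeas : Measurable fun u : Fin k → ℝ => C.mulVec u := by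
    unfold Matrix.mulVec dotProduct
    exact measurable_pi_lambda _ fun j => Finset.measurable_sum _
      fun l _ => (measurable_pi_apply l).const_mul _
  -- the key chain
  have chain : ∀ (E : Set (Fin k → ℝ)), MeasurableSet E → (∀ z, z ∈ E → -z ∈ E) →
      ℙ (Z ⁻¹' E) = gaussM (Fin k) ((fun u => C.mulVec u) ⁻¹' E) := by
    intro E hE hsym
    have h1 : ℙ (Z ⁻¹' E) = Measure.map Z ℙ E := (Measure.map_apply hZmeas hE).symm
    rw [h1, hZlaw, snMeasure_symm_eq Ω hΩpd α E hE hsym, ← hmap,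
      Measure.map_apply hCmeas hE]
  -- apply the independence criterion
  rw [iIndepFun_iff_measure_inter_preimage_eq_mul]
  intro s sets hsets
  -- notation
  set q : Fin h → (Fin k → ℝ) → ℝ := fun i z => z ⬝ᵥ (B i).mulVec z with hq
  set qt : Fin h → (Fin k → ℝ) → ℝ := fun i u => u ⬝ᵥ ((Pᵀ * M i * P).mulVec u) with hqt
  have hqcomp : ∀ i u, q i (C.mulVec u) = qt i u := by
    intro i u
    rw [hq, hqt]
    simp only
    rw [quad_comp, hN i]
  have hpre : ∀ i, (fun ω => Z ω ⬝ᵥ (B i).mulVec (Z ω)) ⁻¹' sets i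
      = Z ⁻¹' (q i ⁻¹' sets i) := fun i => rfl
  have hqsym : ∀ i (A' : Set ℝ), ∀ z, z ∈ q i ⁻¹' A' → -z ∈ q i ⁻¹' A' := by
    intro i A' z hz
    simp only [Set.mem_preimage, hq, quadform_neg] at hz ⊢
    exact hz
  have hqmeas : ∀ i, Measurable (q i) := fun i => measurable_quadform (B i)
  have hqtmeas : ∀ i, Measurable (qt i) := fun i => measurable_quadform (Pᵀ * M i * P)
  have hqtdep : ∀ i ∈ s, ∀ u v : Fin k → ℝ, (∀ j ∈ t i, u j = v j) →
      u ∈ qt i ⁻¹' sets i → v ∈ qt i ⁻¹' sets i := by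
    intro i _ u v huv hu
    simp only [Set.mem_preimage, hqt] at hu ⊢
    rw [← quad_dep (Pᵀ * M i * P) (t i) (hsupp i) u v huv]
    exact hu
  -- LHS
  have hInterMeas : MeasurableSet (⋂ i ∈ s, q i ⁻¹' sets i) :=
    MeasurableSet.biInter (Finset.countable_toSet s)
      (fun i hi => (hqmeas i) (hsets i hi))
  have hInterSym : ∀ z, z ∈ (⋂ i ∈ s, q i ⁻¹' sets i) → -z ∈ ⋂ i ∈ s, q i ⁻¹' sets i := by
    intro z hz
    simp only [Set.mem_iInter] at hz ⊢
    intro i hi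
    exact hqsym i (sets i) z (hz i hi)
  have hpreInter : (fun u => C.mulVec u) ⁻¹' (⋂ i ∈ s, q i ⁻¹' sets i)
      = ⋂ i ∈ s, qt i ⁻¹' sets i := by
    ext u
    simp only [Set.mem_preimage, Set.mem_iInter, hqcomp]
  have hL : ℙ (⋂ i ∈ s, (fun ω => Z ω ⬝ᵥ (B i).mulVec (Z ω)) ⁻¹' sets i)
      = gaussM (Fin k) (⋂ i ∈ s, qt i ⁻¹' sets i) := by
    have : (⋂ i ∈ s, (fun ω => Z ω ⬝ᵥ (B i).mulVec (Z ω)) ⁻¹' sets i)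
        = Z ⁻¹' (⋂ i ∈ s, q i ⁻¹' sets i) := by
      simp only [hpre, Set.preimage_iInter₂]
    rw [this, chain _ hInterMeas hInterSym, hpreInter]
  have hF : ∀ i ∈ s, ℙ ((fun ω => Z ω ⬝ᵥ (B i).mulVec (Z ω)) ⁻¹' sets i)
      = gaussM (Fin k) (qt i ⁻¹' sets i) := by
    intro i hi
    rw [hpre i, chain _ ((hqmeas i) (hsets i hi)) (hqsym i (sets i)),
      Set.preimage_preimage]
    congr 1
    ext u
    simp only [Set.mem_preimage, hqcomp]
  rw [hL, Finset.prod_congr rfl hF]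
  exact gaussM_iInter s t (fun i _ j _ hij => hdisj i j hij) (fun i => qt i ⁻¹' sets i)
    (fun i hi => (hqtmeas i) (hsets i hi)) hqtdep
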